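/- For every integer K ≥ 1 and every integer 1 ≤ k ≤ K, the k-order network distance d_P^k restricted to K-order proximity networks is a metric on the space of K-order proximity networks modulo k-isomorphism: it is nonnegative, symmetric, satisfies the triangle inequality, and d_P^k(P_X,P_Y) = 0 holds if and only if P_X and P_Y are k-isomorphic. -/
import Mathlib


open scoped ENNReal

/-- A correspondence between node sets `X` and `Y`: a set of pairs in which every
`x : X` and every `y : Y` appears. -/
def IsCorrespondence {X Y : Type} (C : Set (X × Y)) : Prop :=
  (∀ x : X, ∃ y : Y, (x, y) ∈ C) ∧ (∀ y : Y, ∃ x : X, (x, y) ∈ C)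

/-- The rank of a tuple: the number of distinct elements appearing in it. -/
noncomputable def tupleRank {X : Type} {n : ℕ} (t : Fin n → X) : ℕ :=
  Set.ncard (Set.range t)

/-- A `K`-order network on a finite nonempty node set `X`: relationship functions
`r k : X^{k+1} → [0,1]` for `0 ≤ k ≤ K`, symmetric under permutations of the arguments,
and such that any subtuple with the same set of distinct elements as the full tuple
carries the same relationship value. -/
structure HONetwork (K : ℕ) (X : Type) [Fintype X] [Nonempty X] : Type where
  r : ∀ k : ℕ, (Fin (k + 1) → X) → ℝ
  r_nonneg : ∀ k, k ≤ K → ∀ t : Fin (k + 1) → X, 0 ≤ r k t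
  r_le_one : ∀ k, k ≤ K → ∀ t : Fin (k + 1) → X, r k t ≤ 1
  symm : ∀ k, k ≤ K → ∀ (t : Fin (k + 1) → X) (σ : Equiv.Perm (Fin (k + 1))),
    r k (t ∘ σ) = r k t
  identity : ∀ k, k ≤ K → ∀ k', k' ≤ K → ∀ (t : Fin (k + 1) → X)
    (ι : Fin (k' + 1) → Fin (k + 1)), StrictMono ι →
    Set.range (t ∘ ι) = Set.range t → r k' (t ∘ ι) = r k t

/-- The `k`-order network difference `Γ^k_{X,Y}(C)`: the largest value of
`|r_X^k(x_{0:k}) − r_Y^k(y_{0:k})|` over tuples of pairs of correspondents in `C`. -/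
noncomputable def Gamma {K : ℕ} {X Y : Type} [Fintype X] [Nonempty X] [Fintype Y] [Nonempty Y]
    (NX : HONetwork K X) (NY : HONetwork K Y) (k : ℕ) (C : Set (X × Y)) : ℝ :=
  sSup { v : ℝ | ∃ (tx : Fin (k + 1) → X) (ty : Fin (k + 1) → Y),
    (∀ i, (tx i, ty i) ∈ C) ∧ v = |NX.r k tx - NY.r k ty| }

/-- The `k`-order network distance: minimum of `Γ^k_{X,Y}(C)` over correspondences `C`. -/
noncomputable def dN {K : ℕ} {X Y : Type} [Fintype X] [Nonempty X] [Fintype Y] [Nonempty Y]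
    (k : ℕ) (NX : HONetwork K X) (NY : HONetwork K Y) : ℝ :=
  sInf { v : ℝ | ∃ C : Set (X × Y), IsCorrespondence C ∧ v = Gamma NX NY k C }

/-- The `p`-norm of a vector in `ℝ^{K+1}`, `1 ≤ p ≤ ∞`. -/
noncomputable def pNorm (K : ℕ) (p : ℝ≥0∞) [Fact (1 ≤ p)] (v : Fin (K + 1) → ℝ) : ℝ :=
  ‖(WithLp.equiv p (Fin (K + 1) → ℝ)).symm v‖

/-- The `p`-norm network distance: minimum over correspondences `C` of the `p`-norm of the
vector `(Γ^0_{X,Y}(C), …, Γ^K_{X,Y}(C))`. -/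
noncomputable def dNp {K : ℕ} {X Y : Type} [Fintype X] [Nonempty X] [Fintype Y] [Nonempty Y]
    (p : ℝ≥0∞) [Fact (1 ≤ p)] (NX : HONetwork K X) (NY : HONetwork K Y) : ℝ :=
  sInf { v : ℝ | ∃ C : Set (X × Y), IsCorrespondence C ∧
    v = pNorm K p (fun k : Fin (K + 1) => Gamma NX NY (k : ℕ) C) }

/-- Two `K`-order networks are `k`-isomorphic if a bijection of the node sets preserves the
`k`-order relationship functions. -/
def kIsomorphic {K : ℕ} {X Y : Type} [Fintype X] [Nonempty X] [Fintype Y] [Nonempty Y]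
    (k : ℕ) (NX : HONetwork K X) (NY : HONetwork K Y) : Prop :=
  ∃ φ : X ≃ Y, ∀ t : Fin (k + 1) → X, NY.r k (fun i => φ (t i)) = NX.r k t

/-- Two `K`-order networks are isomorphic if a bijection of the node sets preserves the
`k`-order relationship functions for all `0 ≤ k ≤ K`. -/
def Isomorphic {K : ℕ} {X Y : Type} [Fintype X] [Nonempty X] [Fintype Y] [Nonempty Y]
    (NX : HONetwork K X) (NY : HONetwork K Y) : Prop :=
  ∃ φ : X ≃ Y, ∀ k, k ≤ K → ∀ t : Fin (k + 1) → X, NY.r k (fun i => φ (t i)) = NX.r k t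

/-- A `K`-order dissimilarity network: a `K`-order network whose relationship functions
decompose as `r^k = d^k + ε · rank`, with nonnegative dissimilarity functions `d^k`
satisfying the order increasing property, and `0 < ε ≤ 1 − (1/K) · max d^K`. -/
structure DissimNetwork (K : ℕ) (X : Type) [Fintype X] [Nonempty X]
    extends HONetwork K X where
  dfun : ∀ k : ℕ, (Fin (k + 1) → X) → ℝ
  eps : ℝ
  dfun_nonneg : ∀ k, k ≤ K → ∀ t : Fin (k + 1) → X, 0 ≤ dfun k t
  decomp : ∀ k, k ≤ K → ∀ t : Fin (k + 1) → X,
    r k t = dfun k t + eps * (tupleRank t : ℝ)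
  order_incr : ∀ k : ℕ, k + 1 ≤ K → ∀ t : Fin (k + 2) → X,
    dfun k (fun i : Fin (k + 1) => t i.castSucc) ≤ dfun (k + 1) t
  eps_pos : 0 < eps
  eps_le : ∀ t : Fin (K + 1) → X, eps ≤ 1 - (1 / (K : ℝ)) * dfun K t

/-- A `K`-order proximity network: a `K`-order network whose relationship functions
decompose as `r^k = p^k − ε · rank`, with nonnegative proximity functions `p^k`
satisfying the order decreasing property, and `0 < ε ≤ (1/K) · min p^K`. -/
structure ProxNetwork (K : ℕ) (X : Type) [Fintype X] [Nonempty X]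
    extends HONetwork K X where
  pfun : ∀ k : ℕ, (Fin (k + 1) → X) → ℝ
  eps : ℝ
  pfun_nonneg : ∀ k, k ≤ K → ∀ t : Fin (k + 1) → X, 0 ≤ pfun k t
  decomp : ∀ k, k ≤ K → ∀ t : Fin (k + 1) → X,
    r k t = pfun k t - eps * (tupleRank t : ℝ)
  order_decr : ∀ k : ℕ, k + 1 ≤ K → ∀ t : Fin (k + 2) → X,
    pfun (k + 1) t ≤ pfun k (fun i : Fin (k + 1) => t i.castSucc)
  eps_pos : 0 < eps
  eps_le : ∀ t : Fin (K + 1) → X, eps ≤ (1 / (K : ℝ)) * pfun K t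

namespace DPAux

variable {K : ℕ} {X Y Z : Type} [Fintype X] [Nonempty X] [Fintype Y] [Nonempty Y]
  [Fintype Z] [Nonempty Z]

def GammaSet (NX : HONetwork K X) (NY : HONetwork K Y) (k : ℕ) (C : Set (X × Y)) : Set ℝ :=
  { v : ℝ | ∃ (tx : Fin (k + 1) → X) (ty : Fin (k + 1) → Y),
    (∀ i, (tx i, ty i) ∈ C) ∧ v = |NX.r k tx - NY.r k ty| }

lemma Gamma_eq (NX : HONetwork K X) (NY : HONetwork K Y) (k : ℕ) (C : Set (X × Y)) :
    Gamma NX NY k C = sSup (GammaSet NX NY k C) := rfl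

lemma gammaSet_finite (NX : HONetwork K X) (NY : HONetwork K Y) (k : ℕ) (C : Set (X × Y)) :
    (GammaSet NX NY k C).Finite := by
  apply (Set.finite_range (fun q : (Fin (k + 1) → X) × (Fin (k + 1) → Y) =>
    |NX.r k q.1 - NY.r k q.2|)).subset
  rintro v ⟨tx, ty, -, rfl⟩
  exact ⟨(tx, ty), rfl⟩

lemma gammaSet_nonempty (NX : HONetwork K X) (NY : HONetwork K Y) (k : ℕ) {C : Set (X × Y)}
    (hC : IsCorrespondence C) : (GammaSet NX NY k C).Nonempty := by
  obtain ⟨y, hy⟩ := hC.1 (Classical.arbitrary X)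
  exact ⟨_, fun _ => Classical.arbitrary X, fun _ => y, fun _ => hy, rfl⟩

lemma le_gamma {NX : HONetwork K X} {NY : HONetwork K Y} {k : ℕ} {C : Set (X × Y)}
    {v : ℝ} (hv : v ∈ GammaSet NX NY k C) : v ≤ Gamma NX NY k C :=
  le_csSup (gammaSet_finite NX NY k C).bddAbove hv

lemma gamma_le {NX : HONetwork K X} {NY : HONetwork K Y} {k : ℕ} {C : Set (X × Y)}
    (hC : IsCorrespondence C) {B : ℝ} (h : ∀ v ∈ GammaSet NX NY k C, v ≤ B) :
    Gamma NX NY k C ≤ B :=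
  csSup_le (gammaSet_nonempty NX NY k hC) h

lemma gamma_nonneg {NX : HONetwork K X} {NY : HONetwork K Y} {k : ℕ} {C : Set (X × Y)}
    (hC : IsCorrespondence C) : 0 ≤ Gamma NX NY k C := by
  obtain ⟨v, hv⟩ := gammaSet_nonempty NX NY k hC
  have h0 : 0 ≤ v := by obtain ⟨tx, ty, -, rfl⟩ := hv; exact abs_nonneg _
  exact le_trans h0 (le_gamma hv)

def dNSet (k : ℕ) (NX : HONetwork K X) (NY : HONetwork K Y) : Set ℝ :=
  { v : ℝ | ∃ C : Set (X × Y), IsCorrespondence C ∧ v = Gamma NX NY k C }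

lemma dN_eq (k : ℕ) (NX : HONetwork K X) (NY : HONetwork K Y) :
    dN k NX NY = sInf (dNSet k NX NY) := rfl

lemma dNSet_finite (k : ℕ) (NX : HONetwork K X) (NY : HONetwork K Y) :
    (dNSet k NX NY).Finite := by
  apply (Set.finite_range (fun C : Set (X × Y) => Gamma NX NY k C)).subset
  rintro v ⟨C, -, rfl⟩
  exact ⟨C, rfl⟩

lemma dNSet_nonempty (k : ℕ) (NX : HONetwork K X) (NY : HONetwork K Y) :
    (dNSet k NX NY).Nonempty :=
  ⟨_, Set.univ, ⟨fun _ => ⟨Classical.arbitrary Y, trivial⟩,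
    fun _ => ⟨Classical.arbitrary X, trivial⟩⟩, rfl⟩

lemma dN_mem (k : ℕ) (NX : HONetwork K X) (NY : HONetwork K Y) :
    dN k NX NY ∈ dNSet k NX NY :=
  (dNSet_nonempty k NX NY).csInf_mem (dNSet_finite k NX NY)

lemma dN_le {k : ℕ} {NX : HONetwork K X} {NY : HONetwork K Y} {v : ℝ}
    (hv : v ∈ dNSet k NX NY) : dN k NX NY ≤ v :=
  csInf_le (dNSet_finite k NX NY).bddBelow hv

lemma dN_nonneg (k : ℕ) (NX : HONetwork K X) (NY : HONetwork K Y) :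
    0 ≤ dN k NX NY := by
  apply le_csInf (dNSet_nonempty k NX NY)
  rintro v ⟨C, hC, rfl⟩
  exact gamma_nonneg hC

lemma dN_symm_le (k : ℕ) (NX : HONetwork K X) (NY : HONetwork K Y) :
    dN k NX NY ≤ dN k NY NX := by
  obtain ⟨C, hC, hCeq⟩ := dN_mem k NY NX
  have hC' : IsCorrespondence {p : X × Y | (p.2, p.1) ∈ C} :=
    ⟨fun x => (hC.2 x).imp fun y hy => hy, fun y => (hC.1 y).imp fun x hx => hx⟩
  have hgam : Gamma NX NY k {p : X × Y | (p.2, p.1) ∈ C} = Gamma NY NX k C := by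
    rw [Gamma_eq, Gamma_eq]
    congr 1
    ext v
    constructor
    · rintro ⟨tx, ty, h, rfl⟩; exact ⟨ty, tx, fun i => h i, by rw [abs_sub_comm]⟩
    · rintro ⟨ty, tx, h, rfl⟩; exact ⟨tx, ty, fun i => h i, by rw [abs_sub_comm]⟩
  have h2 := dN_le (v := Gamma NX NY k {p : X × Y | (p.2, p.1) ∈ C}) ⟨_, hC', rfl⟩
  rw [hgam, ← hCeq] at h2
  exact h2

lemma prox_chain (P : ProxNetwork K Y) : ∀ j, j ≤ K → ∀ t : Fin (j + 1) → Y,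
    P.pfun j t ≤ P.pfun 0 (fun _ => t 0) := by
  intro j
  induction j with
  | zero =>
    intro _ t
    refine le_of_eq ?_
    congr 1
    funext i
    exact congrArg t (Fin.ext (Nat.lt_one_iff.mp i.isLt))
  | succ j ih =>
    intro hj t
    calc P.pfun (j + 1) t ≤ P.pfun j (fun i : Fin (j + 1) => t i.castSucc) :=
          P.order_decr j hj t
      _ ≤ P.pfun 0 (fun _ => t ((0 : Fin (j + 1)).castSucc)) := ih (by omega) _
      _ = P.pfun 0 (fun _ => t 0) := by rw [Fin.castSucc_zero]

lemma rank_const {n : ℕ} (y : Y) : tupleRank (fun _ : Fin (n + 1) => y) = 1 := by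
  unfold tupleRank
  rw [Set.range_const]
  exact Set.ncard_singleton y

lemma prox_distinct {k : ℕ} (hk1 : 1 ≤ k) (hk : k ≤ K) (P : ProxNetwork K Y)
    {y y' : Y} (hne : y ≠ y')
    (h : P.r k (fun _ => y) = P.r k (fun i : Fin (k + 1) => if i = 0 then y else y')) :
    False := by
  obtain ⟨j, rfl⟩ : ∃ j, k = j + 1 := ⟨k - 1, by omega⟩
  set ty : Fin (j + 2) → Y := fun i => if i = 0 then y else y' with hty
  have smono : StrictMono (fun _ : Fin 1 => (0 : Fin (j + 2))) :=
    fun a b hab => absurd (Subsingleton.elim a b) hab.ne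
  have hrangeeq : Set.range ((fun _ : Fin (j + 2) => y) ∘ (fun _ : Fin 1 => (0 : Fin (j + 2))))
      = Set.range (fun _ : Fin (j + 2) => y) := by
    rw [show ((fun _ : Fin (j + 2) => y) ∘ (fun _ : Fin 1 => (0 : Fin (j + 2)))) =
      (fun _ : Fin 1 => y) from rfl]
    rw [Set.range_const, Set.range_const]
  have hid : P.r 0 (fun _ : Fin 1 => y) = P.r (j + 1) (fun _ => y) :=
    P.identity (j + 1) hk 0 (by omega) (fun _ => y) (fun _ => 0) smono hrangeeq
  have h10 : (1 : Fin (j + 2)) ≠ 0 :=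
    Fin.ne_of_val_ne (by rw [Fin.val_one, Fin.val_zero]; omega)
  have hrange : Set.range ty = {y, y'} := by
    ext z
    simp only [Set.mem_range, Set.mem_insert_iff, Set.mem_singleton_iff, hty]
    constructor
    · rintro ⟨i, rfl⟩; by_cases h0 : i = 0 <;> simp [h0]
    · rintro (rfl | rfl)
      · exact ⟨0, by simp⟩
      · exact ⟨1, by simp [h10]⟩
  have hrank : tupleRank ty = 2 := by
    unfold tupleRank
    rw [hrange, Set.ncard_pair hne]
  have e0 : P.r 0 (fun _ : Fin 1 => y) = P.pfun 0 (fun _ : Fin 1 => y) - P.eps * 1 := by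
    rw [P.decomp 0 (by omega), rank_const]
    norm_num
  have e1 : P.r (j + 1) ty = P.pfun (j + 1) ty - P.eps * 2 := by
    rw [P.decomp (j + 1) hk, hrank]
    norm_num
  have hchain : P.pfun (j + 1) ty ≤ P.pfun 0 (fun _ : Fin 1 => ty 0) :=
    prox_chain P (j + 1) hk ty
  have hty0 : (fun _ : Fin 1 => ty 0) = (fun _ : Fin 1 => y) := by
    funext _
    simp [hty]
  rw [hty0] at hchain
  have heps := P.eps_pos
  rw [← h, ← hid, e0] at e1
  linarith

lemma prox_fun {k : ℕ} (hk1 : 1 ≤ k) (hk : k ≤ K) (PY : ProxNetwork K Y)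
    (NX : HONetwork K X) {C : Set (X × Y)}
    (h0 : ∀ (tx : Fin (k + 1) → X) (ty : Fin (k + 1) → Y),
      (∀ i, (tx i, ty i) ∈ C) → NX.r k tx = PY.r k ty)
    {x : X} {y y' : Y} (hy : (x, y) ∈ C) (hy' : (x, y') ∈ C) : y = y' := by
  by_contra hne
  apply prox_distinct hk1 hk PY hne
  have e1 := h0 (fun _ => x) (fun _ => y) (fun _ => hy)
  have e2 := h0 (fun _ => x) (fun i => if i = 0 then y else y')
    (fun i => by by_cases h : i = 0 <;> simp [h, hy, hy'])
  rw [← e1]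
  exact e2

end DPAux

open DPAux

/-- for `K ≥ 1` and `1 ≤ k ≤ K`, the `k`-order network distance restricted to
`K`-order proximity networks is a metric modulo `k`-isomorphism. -/
theorem dP_metric (K k : ℕ) (hK : 1 ≤ K) (hk1 : 1 ≤ k) (hk : k ≤ K)
    (X Y Z : Type) [Fintype X] [Nonempty X] [Fintype Y] [Nonempty Y] [Fintype Z] [Nonempty Z]
    (PX : ProxNetwork K X) (PY : ProxNetwork K Y) (PZ : ProxNetwork K Z) :
    0 ≤ dN k PX.toHONetwork PY.toHONetwork ∧
    dN k PX.toHONetwork PY.toHONetwork = dN k PY.toHONetwork PX.toHONetwork ∧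
    dN k PX.toHONetwork PY.toHONetwork ≤
      dN k PX.toHONetwork PZ.toHONetwork + dN k PZ.toHONetwork PY.toHONetwork ∧
    (dN k PX.toHONetwork PY.toHONetwork = 0 ↔
      kIsomorphic k PX.toHONetwork PY.toHONetwork) := by
  refine ⟨dN_nonneg k _ _, le_antisymm (dN_symm_le k _ _) (dN_symm_le k _ _), ?_, ?_, ?_⟩
  · -- triangle inequality
    obtain ⟨C1, hC1, e1⟩ := dN_mem k PX.toHONetwork PZ.toHONetwork
    obtain ⟨C2, hC2, e2⟩ := dN_mem k PZ.toHONetwork PY.toHONetwork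
    have hCcorr : IsCorrespondence {p : X × Y | ∃ z : Z, (p.1, z) ∈ C1 ∧ (z, p.2) ∈ C2} := by
      constructor
      · intro x
        obtain ⟨z, hz⟩ := hC1.1 x
        obtain ⟨y, hy⟩ := hC2.1 z
        exact ⟨y, z, hz, hy⟩
      · intro y
        obtain ⟨z, hz⟩ := hC2.2 y
        obtain ⟨x, hx⟩ := hC1.2 z
        exact ⟨x, z, hx, hz⟩
    have hb : Gamma PX.toHONetwork PY.toHONetwork k
        {p : X × Y | ∃ z : Z, (p.1, z) ∈ C1 ∧ (z, p.2) ∈ C2} ≤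
        Gamma PX.toHONetwork PZ.toHONetwork k C1 +
        Gamma PZ.toHONetwork PY.toHONetwork k C2 := by
      apply gamma_le hCcorr
      rintro v ⟨tx, ty, h, rfl⟩
      have h' : ∀ i, ∃ z : Z, (tx i, z) ∈ C1 ∧ (z, ty i) ∈ C2 := h
      choose tz h1 h2 using h'
      calc |PX.r k tx - PY.r k ty|
          ≤ |PX.r k tx - PZ.r k tz| + |PZ.r k tz - PY.r k ty| := abs_sub_le _ _ _
        _ ≤ _ := add_le_add (le_gamma ⟨tx, tz, h1, rfl⟩) (le_gamma ⟨tz, ty, h2, rfl⟩)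
    have h3 := dN_le (v := Gamma PX.toHONetwork PY.toHONetwork k
      {p : X × Y | ∃ z : Z, (p.1, z) ∈ C1 ∧ (z, p.2) ∈ C2}) ⟨_, hCcorr, rfl⟩
    rw [e1, e2]
    linarith
  · -- dN = 0 → k-isomorphic
    intro h0
    obtain ⟨C, hC, hCeq⟩ := dN_mem k PX.toHONetwork PY.toHONetwork
    rw [h0] at hCeq
    have hzero : ∀ (tx : Fin (k + 1) → X) (ty : Fin (k + 1) → Y),
        (∀ i, (tx i, ty i) ∈ C) → PX.r k tx = PY.r k ty := by
      intro tx ty hmem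
      have h1 : |PX.r k tx - PY.r k ty| ≤ Gamma PX.toHONetwork PY.toHONetwork k C :=
        le_gamma ⟨tx, ty, hmem, rfl⟩
      rw [← hCeq] at h1
      have := abs_nonneg (PX.r k tx - PY.r k ty)
      have : |PX.r k tx - PY.r k ty| = 0 := le_antisymm h1 this
      have := abs_eq_zero.mp this
      linarith
    have hfunY : ∀ (x : X) (y y' : Y), (x, y) ∈ C → (x, y') ∈ C → y = y' :=
      fun x y y' hy hy' => prox_fun hk1 hk PY PX.toHONetwork hzero hy hy'
    have hfunX : ∀ (x x' : X) (y : Y), (x, y) ∈ C → (x', y) ∈ C → x = x' := by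
      intro x x' y hx hx'
      refine prox_fun hk1 hk PX PY.toHONetwork
        (C := {p : Y × X | (p.2, p.1) ∈ C}) ?_ (x := y) hx hx'
      intro ty tx hmem
      exact (hzero tx ty (fun i => hmem i)).symm
    choose f hf using hC.1
    have hinj : Function.Injective f := by
      intro a b hab
      exact hfunX a b (f a) (hf a) (hab ▸ hf b)
    have hsurj : Function.Surjective f := by
      intro y
      obtain ⟨x, hx⟩ := hC.2 y
      exact ⟨x, hfunY x (f x) y (hf x) hx⟩
    refine ⟨Equiv.ofBijective f ⟨hinj, hsurj⟩, ?_⟩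
    intro t
    exact (hzero t (fun i => f (t i)) (fun i => hf (t i))).symm
  · -- k-isomorphic → dN = 0
    rintro ⟨φ, hφ⟩
    have hCcorr : IsCorrespondence {p : X × Y | p.2 = φ p.1} :=
      ⟨fun x => ⟨φ x, rfl⟩, fun y => ⟨φ.symm y, (φ.apply_symm_apply y).symm⟩⟩
    have hset : GammaSet PX.toHONetwork PY.toHONetwork k {p : X × Y | p.2 = φ p.1} = {0} := by
      apply Set.Subset.antisymm
      · rintro v ⟨tx, ty, h, rfl⟩
        have : ty = fun i => φ (tx i) := funext fun i => h i
        rw [this, hφ tx]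
        simp
      · rintro v rfl
        refine ⟨fun _ => Classical.arbitrary X, fun _ => φ (Classical.arbitrary X),
          fun _ => rfl, ?_⟩
        rw [show (fun _ : Fin (k + 1) => φ (Classical.arbitrary X)) =
          (fun i : Fin (k + 1) => φ ((fun _ => Classical.arbitrary X) i)) from rfl,
          hφ (fun _ => Classical.arbitrary X)]
        simp
    have hg : Gamma PX.toHONetwork PY.toHONetwork k {p : X × Y | p.2 = φ p.1} = 0 := by
      rw [Gamma_eq, hset, csSup_singleton]
    have hle : dN k PX.toHONetwork PY.toHONetwork ≤ 0 :=
      dN_le ⟨_, hCcorr, hg.symm⟩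
    exact le_antisymm hle (dN_nonneg k _ _)
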